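/- arXiv:1007.3098 — 2 statements merged into one kernel-verified Lean document; each statement's English description precedes it below -/
import Mathlib

section
/- For any Y, B ∈ ℝ^{n×m} with singular values d_{0,1} ≥ d_{0,2} ≥ … and d_1 ≥ d_2 ≥ …, respectively, one has ‖Y − B‖_F² ≥ Σ_i (d_{0,i} − d_i)². -/
open Matrix Finset

/-- Squared Frobenius norm of a real matrix. -/
def frobSq {n m : ℕ} (A : Matrix (Fin n) (Fin m) ℝ) : ℝ := ∑ i, ∑ j, A i j ^ 2

/-- `(U, σ, V)` is a (reduced) singular value decomposition of the real `n × m` matrix `B`. -/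
def IsSVD {n m k : ℕ} (B : Matrix (Fin n) (Fin m) ℝ) (U : Matrix (Fin n) (Fin k) ℝ)
    (σ : Fin k → ℝ) (V : Matrix (Fin m) (Fin k) ℝ) : Prop :=
  Uᵀ * U = 1 ∧ Vᵀ * V = 1 ∧ Antitone σ ∧ (∀ i, 0 ≤ σ i) ∧ B = U * diagonal σ * Vᵀ

lemma proj_quad_le {n : ℕ} (M : Matrix (Fin n) (Fin n) ℝ) (hsym : Mᵀ = M)
    (hidem : M * M = M) (x : Fin n → ℝ) :
    x ⬝ᵥ (M *ᵥ x) ≤ x ⬝ᵥ x := by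
  set y := M *ᵥ x with hy
  have hyy : y ⬝ᵥ y = x ⬝ᵥ y := by
    calc y ⬝ᵥ y = y ⬝ᵥ (M *ᵥ x) := rfl
      _ = (y ᵥ* M) ⬝ᵥ x := by rw [Matrix.dotProduct_mulVec]
      _ = (Mᵀ *ᵥ y) ⬝ᵥ x := by rw [Matrix.mulVec_transpose]
      _ = (M *ᵥ (M *ᵥ x)) ⬝ᵥ x := by rw [hsym, hy]
      _ = ((M * M) *ᵥ x) ⬝ᵥ x := by rw [Matrix.mulVec_mulVec]
      _ = y ⬝ᵥ x := by rw [hidem]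
      _ = x ⬝ᵥ y := dotProduct_comm _ _
  have key : (x - y) ⬝ᵥ (x - y) = x ⬝ᵥ x - x ⬝ᵥ y - (y ⬝ᵥ x - y ⬝ᵥ y) := by
    rw [sub_dotProduct, dotProduct_sub, dotProduct_sub]
  have hpos : 0 ≤ (x - y) ⬝ᵥ (x - y) := Finset.sum_nonneg fun i _ => mul_self_nonneg _
  have hc : y ⬝ᵥ x = x ⬝ᵥ y := dotProduct_comm _ _
  linarith [key ▸ hpos]

lemma rowsq_le_one {n k : ℕ} (U W : Matrix (Fin n) (Fin k) ℝ)
    (hU : Uᵀ * U = 1) (hW : Wᵀ * W = 1) (i : Fin k) :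
    ∑ j, ((Uᵀ * W) i j) ^ 2 ≤ 1 := by
  set M := W * Wᵀ with hM
  have hsym : Mᵀ = M := by rw [hM, transpose_mul, transpose_transpose]
  have hidem : M * M = M := by
    rw [hM]
    calc W * Wᵀ * (W * Wᵀ) = W * ((Wᵀ * W) * Wᵀ) := by simp only [Matrix.mul_assoc]
      _ = W * Wᵀ := by rw [hW, Matrix.one_mul]
  set x : Fin n → ℝ := fun l => U l i with hx
  have e1 : ∑ j, ((Uᵀ * W) i j) ^ 2 = x ⬝ᵥ (M *ᵥ x) := by
    simp only [Matrix.mul_apply, Matrix.mulVec, dotProduct, transpose_apply, sq, hM, hx,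
      Finset.sum_mul, Finset.mul_sum]
    rw [Finset.sum_comm]
    apply Finset.sum_congr rfl; intro a _
    rw [Finset.sum_comm]
    apply Finset.sum_congr rfl; intro b _
    apply Finset.sum_congr rfl; intro c _
    ring
  have e2 : x ⬝ᵥ x = 1 := by
    have := congrArg (fun A => A i i) hU
    simpa [Matrix.mul_apply, dotProduct, hx, Matrix.one_apply] using this
  rw [e1, ← e2]
  exact proj_quad_le M hsym hidem x

lemma Tbound {k : ℕ} (S : Fin k → Fin k → ℝ)
    (hS : ∀ i j, 0 ≤ S i j) (hrow : ∀ i, ∑ j, S i j ≤ 1) (hcol : ∀ j, ∑ i, S i j ≤ 1)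
    (A B : Finset (Fin k)) (hAB : A ⊆ B ∨ B ⊆ A) :
    ∑ i ∈ A, ∑ j ∈ B, S i j ≤ (A ∩ B).card := by
  rcases hAB with h | h
  · rw [Finset.inter_eq_left.mpr h]
    calc ∑ i ∈ A, ∑ j ∈ B, S i j ≤ ∑ i ∈ A, (1:ℝ) := by
          apply Finset.sum_le_sum; intro i _
          calc ∑ j ∈ B, S i j ≤ ∑ j, S i j :=
                Finset.sum_le_sum_of_subset_of_nonneg (Finset.subset_univ B)
                  (fun j _ _ => hS i j)
            _ ≤ 1 := hrow i
      _ = A.card := by simp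
  · rw [Finset.inter_eq_right.mpr h, Finset.sum_comm]
    calc ∑ j ∈ B, ∑ i ∈ A, S i j ≤ ∑ j ∈ B, (1:ℝ) := by
          apply Finset.sum_le_sum; intro j _
          calc ∑ i ∈ A, S i j ≤ ∑ i, S i j :=
                Finset.sum_le_sum_of_subset_of_nonneg (Finset.subset_univ A)
                  (fun i _ _ => hS i j)
            _ ≤ 1 := hcol j
      _ = B.card := by simp

lemma antitone_repr {k : ℕ} (d0 : Fin k → ℝ) (hd0 : Antitone d0) (hd0' : ∀ i, 0 ≤ d0 i) :
    ∃ e : ℕ → ℝ, (∀ a, 0 ≤ e a) ∧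
      ∀ i : Fin k, d0 i = ∑ a ∈ Finset.range k, if i.1 ≤ a then e a else 0 := by
  set D : ℕ → ℝ := fun a => if h : a < k then d0 ⟨a, h⟩ else 0 with hD
  have hDk : D k = 0 := by simp [hD]
  refine ⟨fun a => D a - D (a + 1), ?_, ?_⟩
  · intro a
    simp only [hD, sub_nonneg]
    split_ifs with h1 h2
    · exact hd0 (show (⟨a, h2⟩ : Fin k) ≤ ⟨a+1, h1⟩ from Nat.le_succ a)
    · exact absurd (Nat.lt_of_succ_lt h1) h2
    · exact hd0' _
    · exact le_refl 0
  · intro i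
    have hfil : Finset.filter (fun a => i.1 ≤ a) (Finset.range k) = Finset.Ico i.1 k := by
      ext a; simp [Finset.mem_filter, Finset.mem_range, Finset.mem_Ico, and_comm]
    rw [← Finset.sum_filter, hfil,
      Finset.sum_Ico_eq_sub _ (le_of_lt i.2), Finset.sum_range_sub' D, Finset.sum_range_sub' D,
      hDk]
    simp [hD, i.2]

lemma swap4 {α β γ δ : Type*} (s : Finset α) (t : Finset β) (u : Finset γ) (v : Finset δ)
    (F : α → β → γ → δ → ℝ) :
    ∑ i ∈ s, ∑ j ∈ t, ∑ a ∈ u, ∑ b ∈ v, F i j a b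
      = ∑ a ∈ u, ∑ b ∈ v, ∑ i ∈ s, ∑ j ∈ t, F i j a b :=
  calc ∑ i ∈ s, ∑ j ∈ t, ∑ a ∈ u, ∑ b ∈ v, F i j a b
      = ∑ i ∈ s, ∑ a ∈ u, ∑ j ∈ t, ∑ b ∈ v, F i j a b :=
        Finset.sum_congr rfl fun i _ => Finset.sum_comm
    _ = ∑ a ∈ u, ∑ i ∈ s, ∑ j ∈ t, ∑ b ∈ v, F i j a b := Finset.sum_comm
    _ = ∑ a ∈ u, ∑ i ∈ s, ∑ b ∈ v, ∑ j ∈ t, F i j a b :=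
        Finset.sum_congr rfl fun a _ => Finset.sum_congr rfl fun i _ => Finset.sum_comm
    _ = ∑ a ∈ u, ∑ b ∈ v, ∑ i ∈ s, ∑ j ∈ t, F i j a b :=
        Finset.sum_congr rfl fun a _ => Finset.sum_comm

lemma substochastic_bound {k : ℕ} (d0 d : Fin k → ℝ) (S : Fin k → Fin k → ℝ)
    (hd0 : Antitone d0) (hd0' : ∀ i, 0 ≤ d0 i) (hd : Antitone d) (hd' : ∀ i, 0 ≤ d i)
    (hS : ∀ i j, 0 ≤ S i j) (hrow : ∀ i, ∑ j, S i j ≤ 1) (hcol : ∀ j, ∑ i, S i j ≤ 1) :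
    ∑ i, ∑ j, d0 i * d j * S i j ≤ ∑ i, d0 i * d i := by
  obtain ⟨e, he, hrep0⟩ := antitone_repr d0 hd0 hd0'
  obtain ⟨f, hf, hrep⟩ := antitone_repr d hd hd'
  set A : ℕ → Finset (Fin k) := fun a => Finset.filter (fun i : Fin k => i.1 ≤ a) Finset.univ
    with hA
  have hsumA : ∀ (a : ℕ) (G : Fin k → ℝ),
      (∑ i, if i.1 ≤ a then G i else 0) = ∑ i ∈ A a, G i := by
    intro a G; rw [hA, Finset.sum_filter]
  have lhs_eq : ∑ i, ∑ j, d0 i * d j * S i j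
      = ∑ a ∈ Finset.range k, ∑ b ∈ Finset.range k,
          e a * f b * (∑ i ∈ A a, ∑ j ∈ A b, S i j) := by
    calc ∑ i, ∑ j, d0 i * d j * S i j
        = ∑ i, ∑ j, ∑ a ∈ Finset.range k, ∑ b ∈ Finset.range k,
            (if i.1 ≤ a then e a else 0) * (if j.1 ≤ b then f b else 0) * S i j := by
          apply Finset.sum_congr rfl; intro i _
          apply Finset.sum_congr rfl; intro j _
          rw [hrep0 i, hrep j, Finset.sum_mul_sum, Finset.sum_mul]
          apply Finset.sum_congr rfl; intro a _
          rw [Finset.sum_mul]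
      _ = ∑ a ∈ Finset.range k, ∑ b ∈ Finset.range k, ∑ i, ∑ j,
            (if i.1 ≤ a then e a else 0) * (if j.1 ≤ b then f b else 0) * S i j :=
          swap4 _ _ _ _ _
      _ = ∑ a ∈ Finset.range k, ∑ b ∈ Finset.range k,
            e a * f b * (∑ i ∈ A a, ∑ j ∈ A b, S i j) := by
          apply Finset.sum_congr rfl; intro a _
          apply Finset.sum_congr rfl; intro b _
          have point : ∀ (i j : Fin k),
              (if i.1 ≤ a then e a else 0) * (if j.1 ≤ b then f b else 0) * S i j
              = if i.1 ≤ a then (if j.1 ≤ b then e a * f b * S i j else 0) else 0 := by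
            intro i j; split_ifs <;> ring
          calc ∑ i, ∑ j, (if i.1 ≤ a then e a else 0) * (if j.1 ≤ b then f b else 0) * S i j
              = ∑ i : Fin k, if i.1 ≤ a then (∑ j ∈ A b, e a * f b * S i j) else 0 := by
                apply Finset.sum_congr rfl; intro i _
                simp only [point]
                split_ifs with h
                · exact hsumA b _
                · simp
            _ = ∑ i ∈ A a, ∑ j ∈ A b, e a * f b * S i j := hsumA a _
            _ = e a * f b * (∑ i ∈ A a, ∑ j ∈ A b, S i j) := by
                simp only [Finset.mul_sum]
  have rhs_eq : ∑ i, d0 i * d i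
      = ∑ a ∈ Finset.range k, ∑ b ∈ Finset.range k,
          e a * f b * ((A a ∩ A b).card : ℝ) := by
    calc ∑ i, d0 i * d i
        = ∑ i : Fin k, ∑ a ∈ Finset.range k, ∑ b ∈ Finset.range k,
            (if i.1 ≤ a then e a else 0) * (if i.1 ≤ b then f b else 0) := by
          apply Finset.sum_congr rfl; intro i _
          rw [hrep0 i, hrep i, Finset.sum_mul_sum]
      _ = ∑ a ∈ Finset.range k, ∑ b ∈ Finset.range k, ∑ i : Fin k,
            (if i.1 ≤ a then e a else 0) * (if i.1 ≤ b then f b else 0) := by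
          rw [Finset.sum_comm]
          apply Finset.sum_congr rfl; intro a _
          rw [Finset.sum_comm]
      _ = ∑ a ∈ Finset.range k, ∑ b ∈ Finset.range k,
            e a * f b * ((A a ∩ A b).card : ℝ) := by
          apply Finset.sum_congr rfl; intro a _
          apply Finset.sum_congr rfl; intro b _
          have point : ∀ i : Fin k,
              (if i.1 ≤ a then e a else 0) * (if i.1 ≤ b then f b else 0)
              = if i.1 ≤ a ∧ i.1 ≤ b then e a * f b else 0 := by
            intro i; by_cases h1 : i.1 ≤ a <;> by_cases h2 : i.1 ≤ b <;> simp [h1, h2]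
          simp only [point]
          rw [← Finset.sum_filter]
          have : Finset.filter (fun i : Fin k => i.1 ≤ a ∧ i.1 ≤ b) Finset.univ = A a ∩ A b := by
            rw [hA]; ext i; simp [Finset.mem_filter, Finset.mem_inter]
          rw [this, Finset.sum_const, nsmul_eq_mul]
          ring
  rw [lhs_eq, rhs_eq]
  apply Finset.sum_le_sum; intro a _
  apply Finset.sum_le_sum; intro b _
  have hnest : A a ⊆ A b ∨ A b ⊆ A a := by
    rcases le_total a b with h | h
    · exact Or.inl (Finset.monotone_filter_right _ (fun i _ hi => le_trans hi h))
    · exact Or.inr (Finset.monotone_filter_right _ (fun i _ hi => le_trans hi h))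
  exact mul_le_mul_of_nonneg_left (Tbound S hS hrow hcol (A a) (A b) hnest)
    (mul_nonneg (he a) (hf b))

lemma trace_le {n m k : ℕ} (Y B : Matrix (Fin n) (Fin m) ℝ)
    (UY : Matrix (Fin n) (Fin k) ℝ) (d0 : Fin k → ℝ) (VY : Matrix (Fin m) (Fin k) ℝ)
    (UB : Matrix (Fin n) (Fin k) ℝ) (d : Fin k → ℝ) (VB : Matrix (Fin m) (Fin k) ℝ)
    (hY : IsSVD Y UY d0 VY) (hB : IsSVD B UB d VB) :
    (Yᵀ * B).trace ≤ ∑ i, d0 i * d i := by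
  obtain ⟨hUY, hVY, hd0, hd0', hYf⟩ := hY
  obtain ⟨hUB, hVB, hd, hd', hBf⟩ := hB
  set P : Matrix (Fin k) (Fin k) ℝ := UYᵀ * UB with hP
  set Q : Matrix (Fin k) (Fin k) ℝ := VYᵀ * VB with hQ
  set M : Matrix (Fin k) (Fin k) ℝ := diagonal d0 * (P * diagonal d) with hM
  have hfac : Yᵀ * B = VY * M * VBᵀ := by
    rw [hYf, hBf, hM, hP]
    simp only [transpose_mul, transpose_transpose, diagonal_transpose, Matrix.mul_assoc]
  have htr : (Yᵀ * B).trace = ∑ i, ∑ j, d0 i * d j * (P i j * Q i j) := by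
    rw [hfac, Matrix.mul_assoc, trace_mul_comm, Matrix.mul_assoc]
    have hQt : VBᵀ * VY = Qᵀ := by rw [hQ, transpose_mul, transpose_transpose]
    rw [hQt]
    have hMentry : ∀ i j, M i j = d0 i * (P i j * d j) := by
      intro i j; rw [hM, Matrix.diagonal_mul, Matrix.mul_diagonal]
    simp only [Matrix.trace, Matrix.diag_apply, Matrix.mul_apply, transpose_apply, hMentry]
    apply Finset.sum_congr rfl; intro i _
    apply Finset.sum_congr rfl; intro j _
    ring
  rw [htr]
  set S : Fin k → Fin k → ℝ := fun i j => (P i j ^ 2 + Q i j ^ 2) / 2 with hS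
  have step1 : ∑ i, ∑ j, d0 i * d j * (P i j * Q i j) ≤ ∑ i, ∑ j, d0 i * d j * S i j := by
    apply Finset.sum_le_sum; intro i _
    apply Finset.sum_le_sum; intro j _
    apply mul_le_mul_of_nonneg_left _ (mul_nonneg (hd0' i) (hd' j))
    have : P i j * Q i j ≤ (P i j ^ 2 + Q i j ^ 2) / 2 := by
      nlinarith [sq_nonneg (P i j - Q i j)]
    simpa [hS] using this
  refine le_trans step1 (substochastic_bound d0 d S hd0 hd0' hd hd' ?_ ?_ ?_)
  · intro i j; positivity
  · intro i
    have h1 := rowsq_le_one UY UB hUY hUB i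
    have h2 := rowsq_le_one VY VB hVY hVB i
    have : ∑ j, S i j = ((∑ j, P i j ^ 2) + ∑ j, Q i j ^ 2) / 2 := by
      simp only [hS]
      rw [← Finset.sum_div, Finset.sum_add_distrib]
    rw [this]; linarith
  · intro j
    have h1 := rowsq_le_one UB UY hUB hUY j
    have h2 := rowsq_le_one VB VY hVB hVY j
    have e1 : ∀ i : Fin k, P i j = (UBᵀ * UY) j i := by
      intro i; simp [hP, Matrix.mul_apply, mul_comm]
    have e2 : ∀ i : Fin k, Q i j = (VBᵀ * VY) j i := by
      intro i; simp [hQ, Matrix.mul_apply, mul_comm]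
    have : ∑ i, S i j = ((∑ i, (UBᵀ * UY) j i ^ 2) + ∑ i, (VBᵀ * VY) j i ^ 2) / 2 := by
      simp only [hS, e1, e2]
      rw [← Finset.sum_div, Finset.sum_add_distrib]
    rw [this]; linarith

lemma trace_self {n m k : ℕ} (Y : Matrix (Fin n) (Fin m) ℝ)
    (UY : Matrix (Fin n) (Fin k) ℝ) (d0 : Fin k → ℝ) (VY : Matrix (Fin m) (Fin k) ℝ)
    (hY : IsSVD Y UY d0 VY) : (Yᵀ * Y).trace = ∑ i, d0 i ^ 2 := by
  obtain ⟨hU, hV, -, -, hfac⟩ := hY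
  have : Yᵀ * Y = VY * (diagonal d0 * diagonal d0) * VYᵀ := by
    rw [hfac]
    simp only [transpose_mul, transpose_transpose, diagonal_transpose]
    calc VY * (diagonal d0 * UYᵀ) * (UY * diagonal d0 * VYᵀ)
        = VY * (diagonal d0 * ((UYᵀ * UY) * (diagonal d0 * VYᵀ))) := by
          simp only [Matrix.mul_assoc]
      _ = VY * (diagonal d0 * diagonal d0) * VYᵀ := by
          rw [hU, Matrix.one_mul]; simp only [Matrix.mul_assoc]
  rw [this, Matrix.mul_assoc, trace_mul_comm, Matrix.mul_assoc, hV, Matrix.mul_one,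
    diagonal_mul_diagonal, trace_diagonal]
  exact Finset.sum_congr rfl fun i _ => (sq (d0 i)).symm

lemma frobSq_eq_trace {n m : ℕ} (A : Matrix (Fin n) (Fin m) ℝ) :
    frobSq A = (Aᵀ * A).trace := by
  simp only [frobSq, trace, Matrix.mul_apply, Matrix.diag, transpose_apply, sq]
  rw [Finset.sum_comm]

/-- For any `Y, B ∈ ℝ^{n×m}` with singular values `d₀` and `d` (in decreasing order),
`‖Y − B‖_F² ≥ ∑_i (d₀_i − d_i)²`. -/
theorem frobenius_ge_singular_value_diff {n m : ℕ}
    (Y B : Matrix (Fin n) (Fin m) ℝ)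
    (UY : Matrix (Fin n) (Fin (min n m)) ℝ) (d0 : Fin (min n m) → ℝ)
    (VY : Matrix (Fin m) (Fin (min n m)) ℝ)
    (UB : Matrix (Fin n) (Fin (min n m)) ℝ) (d : Fin (min n m) → ℝ)
    (VB : Matrix (Fin m) (Fin (min n m)) ℝ)
    (hY : IsSVD Y UY d0 VY) (hB : IsSVD B UB d VB) :
    frobSq (Y - B) ≥ ∑ i, (d0 i - d i) ^ 2 := by
  have e1 : frobSq (Y - B) = (Yᵀ * Y).trace + (Bᵀ * B).trace - 2 * (Yᵀ * B).trace := by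
    rw [frobSq_eq_trace]
    have : (Y - B)ᵀ * (Y - B) = Yᵀ * Y - Yᵀ * B - Bᵀ * Y + Bᵀ * B := by
      rw [transpose_sub, Matrix.sub_mul, Matrix.mul_sub, Matrix.mul_sub]
      noncomm_ring
    rw [this]
    have hBY : (Bᵀ * Y).trace = (Yᵀ * B).trace := by
      rw [← trace_transpose (Bᵀ * Y), transpose_mul, transpose_transpose]
    simp only [trace_add, trace_sub, hBY]; ring
  rw [e1, trace_self Y UY d0 VY hY, trace_self B UB d VB hB]
  have h2 := trace_le Y B UY d0 VY UB d VB hY hB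
  have expand : ∑ i, (d0 i - d i) ^ 2 = ∑ i, d0 i ^ 2 + ∑ i, d i ^ 2 - 2 * ∑ i, d0 i * d i := by
    rw [Finset.mul_sum, ← Finset.sum_add_distrib, ← Finset.sum_sub_distrib]
    apply Finset.sum_congr rfl; intro i _; ring
  rw [ge_iff_le, expand]
  linarith
end

section
/- Let Θ be a threshold function and λ ≥ 0, and suppose there is a constant L_Θ ∈ [0,1] such that the map u ↦ sup{t : Θ(t;λ) ≤ u} − (1−L_Θ)u is nondecreasing on (0,∞). Let P_Θ be the penalty obtained from condition (constrP) with q ≡ 0. Given Y ∈ ℝ^{n×m}, suppose Θ(·;λ) is continuous at every singular value of Y, and let B̂ = Θ^σ(Y;λ) (the minimizer of Q). Then for every matrix Δ ∈ ℝ^{n×m}, Q(B̂+Δ) − Q(B̂) ≥ (C₁/2)‖Δ‖_F², where Q(B) = ‖Y−B‖_F²/2 + Σ_i P_Θ(σ_i(B);λ) and C₁ = 1 − L_Θ. -/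
open Matrix

/-- A threshold function `Θ(t; λ)`. -/
def IsThresholdFunction (Θ : ℝ → ℝ → ℝ) : Prop :=
  ∀ lam : ℝ, 0 ≤ lam →
    (∀ t : ℝ, Θ (-t) lam = -Θ t lam) ∧
    (Monotone fun t => Θ t lam) ∧
    Filter.Tendsto (fun t => Θ t lam) Filter.atTop Filter.atTop ∧
    (∀ t : ℝ, 0 ≤ t → 0 ≤ Θ t lam ∧ Θ t lam ≤ t)

/-- The penalty obtained from condition (constrP) with `q ≡ 0`:
`P_Θ(θ;λ) = ∫₀^{|θ|} (sup{s : Θ(s;λ) ≤ u} − u) du`. -/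
noncomputable def penaltyOf (Θ : ℝ → ℝ → ℝ) (lam θ : ℝ) : ℝ :=
  ∫ u in (0:ℝ)..|θ|, (sSup {s : ℝ | Θ s lam ≤ u} - u)

open MeasureTheory intervalIntegral

/-! ### Scalar auxiliary lemmas -/

section scalar

variable {f : ℝ → ℝ} {L : ℝ}

private lemma thf_bdd (hmono : Monotone f) (htop : Filter.Tendsto f Filter.atTop Filter.atTop)
    (u : ℝ) : BddAbove {s : ℝ | f s ≤ u} := by
  obtain ⟨T, hT⟩ := Filter.eventually_atTop.mp (htop.eventually_gt_atTop u)
  refine ⟨T, fun s hs => ?_⟩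
  by_contra h
  push_neg at h
  exact absurd hs (not_le.mpr (hT s h.le))

private lemma thf_keyA (hmono : Monotone f) (htop : Filter.Tendsto f Filter.atTop Filter.atTop)
    (hL0 : 0 ≤ L) (hL1 : L ≤ 1)
    (hLmono : ∀ u v : ℝ, 0 < u → u ≤ v →
      sSup {s : ℝ | f s ≤ u} - (1 - L) * u ≤ sSup {s : ℝ | f s ≤ v} - (1 - L) * v)
    (σ0 : ℝ) (hσ0 : 0 ≤ σ0) (hθ0 : 0 ≤ f σ0)
    (t : ℝ) (ht : f σ0 ≤ t) :
    σ0 - (1 - L) * f σ0 ≤ sSup {s : ℝ | f s ≤ t} - (1 - L) * t := by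
  rcases eq_or_lt_of_le ht with he | hlt
  · have hg : σ0 ≤ sSup {s : ℝ | f s ≤ t} := le_csSup (thf_bdd hmono htop t) ht
    subst he; linarith
  · apply le_of_forall_pos_le_add
    intro ε hε
    set t'' := min (f σ0 + ε) ((f σ0 + t) / 2) with ht''def
    have h1 : f σ0 < t'' := lt_min (by linarith) (by linarith)
    have h2 : t'' ≤ t := le_trans (min_le_right _ _) (by linarith)
    have h0 : 0 < t'' := lt_of_le_of_lt hθ0 h1
    have hm := hLmono t'' t h0 h2
    have hg : σ0 ≤ sSup {s : ℝ | f s ≤ t''} := le_csSup (thf_bdd hmono htop t'') h1.le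
    have ht2 : t'' ≤ f σ0 + ε := min_le_left _ _
    nlinarith [mul_le_mul_of_nonneg_left ht2 (by linarith : (0:ℝ) ≤ 1 - L)]

private lemma thf_keyB (hmono : Monotone f) (htop : Filter.Tendsto f Filter.atTop Filter.atTop)
    (hf0 : f 0 = 0) (hL0 : 0 ≤ L) (hL1 : L ≤ 1)
    (hLmono : ∀ u v : ℝ, 0 < u → u ≤ v →
      sSup {s : ℝ | f s ≤ u} - (1 - L) * u ≤ sSup {s : ℝ | f s ≤ v} - (1 - L) * v)
    (σ0 : ℝ) (hσ0 : 0 ≤ σ0) (hcont : ContinuousAt f σ0)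
    (t : ℝ) (ht0 : 0 < t) (ht : t < f σ0) :
    sSup {s : ℝ | f s ≤ t} - (1 - L) * t ≤ σ0 - (1 - L) * f σ0 := by
  apply le_of_forall_pos_le_add
  intro ε hε
  set t' := max (f σ0 - ε) ((t + f σ0) / 2) with ht'def
  have h1 : t < t' := lt_of_lt_of_le (by linarith) (le_max_right _ _)
  have h2 : t' < f σ0 := max_lt (by linarith) (by linarith)
  have hm := hLmono t t' ht0 h1.le
  have hev : ∀ᶠ s in nhds σ0, t' < f s := hcont.eventually (lt_mem_nhds h2)
  obtain ⟨δ, hδ, hδ2⟩ := Metric.eventually_nhds_iff.mp hev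
  have hs0 : t' < f (σ0 - δ / 2) := by
    apply hδ2
    rw [Real.dist_eq, show σ0 - δ / 2 - σ0 = -(δ / 2) by ring, abs_neg,
      abs_of_nonneg (by linarith)]
    linarith
  have hub : sSup {s : ℝ | f s ≤ t'} ≤ σ0 - δ / 2 := by
    apply csSup_le ⟨0, by simp only [Set.mem_setOf_eq, hf0]; linarith⟩
    intro s hs
    by_contra h
    push_neg at h
    exact absurd hs (not_le.mpr (lt_of_lt_of_le hs0 (hmono h.le)))
  have ht3 : f σ0 - ε ≤ t' := le_max_left _ _
  nlinarith [mul_le_mul_of_nonneg_left ht3 (by linarith : (0:ℝ) ≤ 1 - L)]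

private lemma thf_scalar (hmono : Monotone f) (htop : Filter.Tendsto f Filter.atTop Filter.atTop)
    (hf0 : f 0 = 0) (hbound : ∀ t : ℝ, 0 ≤ t → 0 ≤ f t ∧ f t ≤ t)
    (hL0 : 0 ≤ L) (hL1 : L ≤ 1)
    (hLmono : ∀ u v : ℝ, 0 < u → u ≤ v →
      sSup {s : ℝ | f s ≤ u} - (1 - L) * u ≤ sSup {s : ℝ | f s ≤ v} - (1 - L) * v)
    (σ0 : ℝ) (hσ0 : 0 ≤ σ0) (hcont : ContinuousAt f σ0) (b : ℝ) (hb : 0 ≤ b) :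
    (σ0 - (1 - L) * f σ0) * (b - f σ0) ≤
      ((∫ u in (0:ℝ)..b, (sSup {s : ℝ | f s ≤ u} - u)) + L * b ^ 2 / 2)
      - ((∫ u in (0:ℝ)..(f σ0), (sSup {s : ℝ | f s ≤ u} - u)) + L * (f σ0) ^ 2 / 2) := by
  set g : ℝ → ℝ := fun u => sSup {s : ℝ | f s ≤ u} with hgdef
  obtain ⟨hθ0, hθσ⟩ := hbound σ0 hσ0
  set θ0 := f σ0 with hθ0def
  have hgmono : MonotoneOn g (Set.Ici (0:ℝ)) := by
    intro u hu v _ huv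
    exact csSup_le_csSup (thf_bdd hmono htop v) ⟨0, by simp only [Set.mem_setOf_eq, hf0]; exact hu⟩
      (fun s hs => le_trans hs huv)
  have hIntg : ∀ a c : ℝ, 0 ≤ a → 0 ≤ c → IntervalIntegrable g volume a c := by
    intro a c ha hc
    apply MonotoneOn.intervalIntegrable
    apply hgmono.mono
    intro x hx
    rcases Set.mem_uIcc.mp hx with ⟨h, _⟩ | ⟨h, _⟩
    · exact le_trans ha h
    · exact le_trans hc h
  have hInt : ∀ a c : ℝ, 0 ≤ a → 0 ≤ c →
      IntervalIntegrable (fun u => g u - (1 - L) * u) volume a c :=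
    fun a c ha hc => (hIntg a c ha hc).sub
      ((continuous_const.mul continuous_id).intervalIntegrable a c)
  have hIntgu : ∀ a c : ℝ, 0 ≤ a → 0 ≤ c →
      IntervalIntegrable (fun u => g u - u) volume a c :=
    fun a c ha hc => (hIntg a c ha hc).sub (continuous_id.intervalIntegrable a c)
  have hPR : ∀ x : ℝ, 0 ≤ x →
      (∫ u in (0:ℝ)..x, (g u - u)) + L * x ^ 2 / 2
        = ∫ u in (0:ℝ)..x, (g u - (1 - L) * u) := by
    intro x hx
    have h1 : (∫ u in (0:ℝ)..x, (g u - (1 - L) * u))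
        = ∫ u in (0:ℝ)..x, ((g u - u) + L * u) :=
      intervalIntegral.integral_congr (fun u _ => by ring)
    have hLu : IntervalIntegrable (fun u : ℝ => L * u) volume 0 x :=
      (continuous_const.mul continuous_id).intervalIntegrable 0 x
    rw [h1, intervalIntegral.integral_add (hIntgu 0 x le_rfl hx) hLu,
      intervalIntegral.integral_const_mul, integral_id]
    ring
  rw [hPR b hb, hPR θ0 hθ0,
    integral_interval_sub_left (hInt 0 b le_rfl hb) (hInt 0 θ0 le_rfl hθ0)]
  rcases le_or_gt θ0 b with hle | hlt
  · have hmo := intervalIntegral.integral_mono_on (f := fun _ => σ0 - (1 - L) * θ0) hle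
      intervalIntegrable_const (hInt θ0 b hθ0 hb)
      (fun u hu => thf_keyA hmono htop hL0 hL1 hLmono σ0 hσ0 hθ0 u hu.1)
    rw [intervalIntegral.integral_const, smul_eq_mul] at hmo
    nlinarith [hmo]
  · rw [intervalIntegral.integral_symm]
    have hnull : volume ({0, θ0} : Set ℝ) = 0 := (Set.toFinite _).measure_zero _
    have hae : (fun u => g u - (1 - L) * u)
        ≤ᶠ[ae (volume.restrict (Set.Icc b θ0))] (fun _ => σ0 - (1 - L) * θ0) := by
      rw [Filter.EventuallyLE, ae_restrict_iff' measurableSet_Icc]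
      have h2 : ∀ᵐ (u : ℝ) ∂volume, u ∉ ({0, θ0} : Set ℝ) := by
        rw [ae_iff]
        apply measure_mono_null _ hnull
        intro a ha
        simp only [Set.mem_setOf_eq, not_not] at ha
        exact ha
      filter_upwards [h2] with u hu hu2
      have hu0 : u ≠ 0 := fun h => hu (by simp [h])
      have huθ : u ≠ θ0 := fun h => hu (by simp [h])
      exact thf_keyB hmono htop hf0 hL0 hL1 hLmono σ0 hσ0 hcont u
        (lt_of_le_of_ne (le_trans hb hu2.1) (Ne.symm hu0)) (lt_of_le_of_ne hu2.2 huθ)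
    have hmo := intervalIntegral.integral_mono_ae_restrict hlt.le
      (hInt b θ0 hb hθ0) intervalIntegrable_const hae
    rw [intervalIntegral.integral_const, smul_eq_mul] at hmo
    nlinarith [hmo]

end scalar

/-! ### Combinatorial auxiliary lemmas -/

private lemma wsum (K k : ℕ) (hkK : k ≤ K) (b : ℕ → ℝ)
    (hbm : ∀ i j : ℕ, i ≤ j → b j ≤ b i) (hb0 : ∀ i, 0 ≤ b i)
    (v : ℕ → ℝ) (hv0 : ∀ j, 0 ≤ v j) (hv1 : ∀ j, v j ≤ 1)
    (hvs : ∑ j ∈ Finset.range K, v j ≤ k) :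
    ∑ j ∈ Finset.range K, b j * v j ≤ ∑ j ∈ Finset.range k, b j := by
  have hsplit : ∑ j ∈ Finset.range K, b j * v j
      = ∑ j ∈ Finset.range k, b j * v j + ∑ j ∈ Finset.Ico k K, b j * v j := by
    rw [Finset.range_eq_Ico, ← Finset.sum_Ico_consecutive _ (Nat.zero_le k) hkK, Finset.range_eq_Ico]
  have h1 : ∑ j ∈ Finset.Ico k K, b j * v j ≤ b k * ∑ j ∈ Finset.Ico k K, v j := by
    rw [Finset.mul_sum]
    apply Finset.sum_le_sum
    intro j hj
    exact mul_le_mul_of_nonneg_right (hbm k j (Finset.mem_Ico.mp hj).1) (hv0 j)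
  have h2 : ∑ j ∈ Finset.Ico k K, v j ≤ ∑ j ∈ Finset.range k, (1 - v j) := by
    rw [Finset.sum_Ico_eq_sub _ hkK, Finset.sum_sub_distrib, Finset.sum_const,
      Finset.card_range, nsmul_eq_mul, mul_one]
    linarith
  have h3 : b k * ∑ j ∈ Finset.Ico k K, v j ≤ b k * ∑ j ∈ Finset.range k, (1 - v j) :=
    mul_le_mul_of_nonneg_left h2 (hb0 k)
  have h4 : b k * ∑ j ∈ Finset.range k, (1 - v j) ≤ ∑ j ∈ Finset.range k, b j * (1 - v j) := by
    rw [Finset.mul_sum]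
    apply Finset.sum_le_sum
    intro j hj
    exact mul_le_mul_of_nonneg_right (hbm j k (Finset.mem_range.mp hj).le)
      (by linarith [hv1 j])
  have h5 : ∑ j ∈ Finset.range k, b j * v j + ∑ j ∈ Finset.range k, b j * (1 - v j)
      = ∑ j ∈ Finset.range k, b j := by
    rw [← Finset.sum_add_distrib]
    exact Finset.sum_congr rfl (fun j _ => by ring)
  linarith

private lemma abel_compare (K : ℕ) (r c d : ℕ → ℝ)
    (hrm : ∀ i j : ℕ, i ≤ j → r j ≤ r i) (hr0 : ∀ i, 0 ≤ r i)
    (h : ∀ k, k ≤ K → ∑ i ∈ Finset.range k, c i ≤ ∑ i ∈ Finset.range k, d i) :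
    ∑ i ∈ Finset.range K, r i * c i ≤ ∑ i ∈ Finset.range K, r i * d i := by
  have key : ∑ i ∈ Finset.range K, r i * (c i - d i) ≤ 0 := by
    have habel := Finset.sum_range_by_parts r (fun i => c i - d i) K
    simp only [smul_eq_mul] at habel
    rw [habel]
    have hG : ∀ k, k ≤ K → ∑ i ∈ Finset.range k, (c i - d i) ≤ 0 := by
      intro k hk
      rw [Finset.sum_sub_distrib]
      linarith [h k hk]
    have t1 : r (K - 1) * ∑ i ∈ Finset.range K, (c i - d i) ≤ 0 :=
      mul_nonpos_of_nonneg_of_nonpos (hr0 _) (hG K le_rfl)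
    have t2 : 0 ≤ ∑ i ∈ Finset.range (K - 1),
        (r (i + 1) - r i) * ∑ j ∈ Finset.range (i + 1), (c j - d j) := by
      apply Finset.sum_nonneg
      intro i hi
      have h1 : r (i + 1) - r i ≤ 0 := by linarith [hrm i (i + 1) (Nat.le_succ i)]
      have h2 : ∑ j ∈ Finset.range (i + 1), (c j - d j) ≤ 0 :=
        hG (i + 1) (Nat.succ_le_of_lt ((Finset.mem_range.mp hi).trans_le (Nat.sub_le K 1)))
      nlinarith [mul_nonneg (neg_nonneg.mpr h1) (neg_nonneg.mpr h2)]
    linarith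
  have heq : ∑ i ∈ Finset.range K, r i * (c i - d i)
      = ∑ i ∈ Finset.range K, r i * c i - ∑ i ∈ Finset.range K, r i * d i := by
    rw [← Finset.sum_sub_distrib]
    exact Finset.sum_congr rfl (fun i _ => by ring)
  linarith [heq ▸ key]

private lemma substoch (K : ℕ) (r b : ℕ → ℝ) (w : ℕ → ℕ → ℝ)
    (hrm : ∀ i j : ℕ, i ≤ j → r j ≤ r i) (hr0 : ∀ i, 0 ≤ r i)
    (hbm : ∀ i j : ℕ, i ≤ j → b j ≤ b i) (hb0 : ∀ i, 0 ≤ b i)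
    (hw0 : ∀ i j, 0 ≤ w i j)
    (hrow : ∀ i, ∑ j ∈ Finset.range K, w i j ≤ 1)
    (hcol : ∀ j, ∑ i ∈ Finset.range K, w i j ≤ 1) :
    ∑ i ∈ Finset.range K, ∑ j ∈ Finset.range K, r i * b j * w i j
      ≤ ∑ i ∈ Finset.range K, r i * b i := by
  have hstep : ∑ i ∈ Finset.range K, ∑ j ∈ Finset.range K, r i * b j * w i j
      = ∑ i ∈ Finset.range K, r i * (∑ j ∈ Finset.range K, b j * w i j) := by
    refine Finset.sum_congr rfl (fun i _ => ?_)
    rw [Finset.mul_sum]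
    exact Finset.sum_congr rfl (fun j _ => by ring)
  rw [hstep]
  apply abel_compare K r _ b hrm hr0
  intro k hk
  have hswap : ∑ i ∈ Finset.range k, ∑ j ∈ Finset.range K, b j * w i j
      = ∑ j ∈ Finset.range K, b j * (∑ i ∈ Finset.range k, w i j) := by
    rw [Finset.sum_comm]
    exact Finset.sum_congr rfl (fun j _ => by rw [Finset.mul_sum])
  rw [hswap]
  apply wsum K k hk b hbm hb0
  · intro j
    exact Finset.sum_nonneg (fun i _ => hw0 i j)
  · intro j
    calc ∑ i ∈ Finset.range k, w i j ≤ ∑ i ∈ Finset.range K, w i j :=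
          Finset.sum_le_sum_of_subset_of_nonneg
            (Finset.range_subset_range.mpr hk) (fun i _ _ => hw0 i j)
      _ ≤ 1 := hcol j
  · calc ∑ j ∈ Finset.range K, ∑ i ∈ Finset.range k, w i j
        = ∑ i ∈ Finset.range k, ∑ j ∈ Finset.range K, w i j := Finset.sum_comm
      _ ≤ ∑ i ∈ Finset.range k, 1 := Finset.sum_le_sum (fun i _ => hrow i)
      _ = k := by simp

private lemma fin_sum_dite {K : ℕ} (F : Fin K → ℝ) :
    ∑ p, F p = ∑ i ∈ Finset.range K, (if h : i < K then F ⟨i, h⟩ else 0) := by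
  rw [← Fin.sum_univ_eq_sum_range (fun i => if h : i < K then F ⟨i, h⟩ else 0) K]
  exact Finset.sum_congr rfl fun p _ => by rw [dif_pos p.isLt]

/-! ### Matrix auxiliary lemmas -/

private def inn {n m : ℕ} (A C : Matrix (Fin n) (Fin m) ℝ) : ℝ := ∑ i, ∑ j, A i j * C i j

private lemma frobSq_eq_inn {n m : ℕ} (A : Matrix (Fin n) (Fin m) ℝ) : frobSq A = inn A A := by
  unfold frobSq inn
  exact Finset.sum_congr rfl fun i _ => Finset.sum_congr rfl fun j _ => by rw [sq]

private lemma frobSq_sub_expand {n m : ℕ} (X Z : Matrix (Fin n) (Fin m) ℝ) :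
    frobSq (X - Z) = frobSq X - 2 * inn X Z + frobSq Z := by
  unfold frobSq inn
  rw [show (∑ i, ∑ j, (X - Z) i j ^ 2)
      = ∑ i, ∑ j, (X i j ^ 2 - 2 * (X i j * Z i j) + Z i j ^ 2) from
    Finset.sum_congr rfl fun i _ => Finset.sum_congr rfl fun j _ => by
      simp [Matrix.sub_apply]; ring]
  simp only [Finset.sum_add_distrib, Finset.sum_sub_distrib, ← Finset.mul_sum]

private lemma frobSq_add_expand {n m : ℕ} (X Z : Matrix (Fin n) (Fin m) ℝ) :
    frobSq (X + Z) = frobSq X + 2 * inn X Z + frobSq Z := by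
  unfold frobSq inn
  rw [show (∑ i, ∑ j, (X + Z) i j ^ 2)
      = ∑ i, ∑ j, (X i j ^ 2 + 2 * (X i j * Z i j) + Z i j ^ 2) from
    Finset.sum_congr rfl fun i _ => Finset.sum_congr rfl fun j _ => by
      simp [Matrix.add_apply]; ring]
  simp only [Finset.sum_add_distrib, ← Finset.mul_sum]

private lemma inn_add_right {n m : ℕ} (A X Z : Matrix (Fin n) (Fin m) ℝ) :
    inn A (X + Z) = inn A X + inn A Z := by
  unfold inn
  simp only [Matrix.add_apply, mul_add, Finset.sum_add_distrib]

private lemma inn_entry_expand {n m k : ℕ} (U : Matrix (Fin n) (Fin k) ℝ)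
    (V : Matrix (Fin m) (Fin k) ℝ) (r : Fin k → ℝ) (i : Fin n) (j : Fin m) :
    (U * diagonal r * Vᵀ) i j = ∑ p, U i p * r p * V j p := by
  rw [Matrix.mul_apply]
  exact Finset.sum_congr rfl fun p _ => by rw [Matrix.mul_diagonal, Matrix.transpose_apply]

private lemma sum4_swap {n m k : ℕ} (F : Fin n → Fin m → Fin k → Fin k → ℝ) :
    ∑ i, ∑ j, ∑ p, ∑ q, F i j p q = ∑ p, ∑ q, ∑ i, ∑ j, F i j p q :=
  calc ∑ i, ∑ j, ∑ p, ∑ q, F i j p q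
      = ∑ i, ∑ p, ∑ j, ∑ q, F i j p q :=
        Finset.sum_congr rfl fun i _ => Finset.sum_comm
    _ = ∑ p, ∑ i, ∑ j, ∑ q, F i j p q := Finset.sum_comm
    _ = ∑ p, ∑ i, ∑ q, ∑ j, F i j p q :=
        Finset.sum_congr rfl fun p _ => Finset.sum_congr rfl fun i _ => Finset.sum_comm
    _ = ∑ p, ∑ q, ∑ i, ∑ j, F i j p q :=
        Finset.sum_congr rfl fun p _ => Finset.sum_comm

private lemma inn_svd {n m k : ℕ} (U UD : Matrix (Fin n) (Fin k) ℝ)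
    (V VD : Matrix (Fin m) (Fin k) ℝ) (r b : Fin k → ℝ) :
    inn (U * diagonal r * Vᵀ) (UD * diagonal b * VDᵀ)
      = ∑ p, ∑ q, r p * b q * ((Uᵀ * UD) p q * (Vᵀ * VD) p q) := by
  unfold inn
  simp only [inn_entry_expand, Finset.sum_mul_sum]
  rw [show ∑ p, ∑ q, r p * b q * ((Uᵀ * UD) p q * (Vᵀ * VD) p q)
      = ∑ p, ∑ q, ∑ i, ∑ j, (U i p * r p * V j p) * (UD i q * b q * VD j q) from
    Finset.sum_congr rfl fun p _ => Finset.sum_congr rfl fun q _ => by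
      rw [Matrix.mul_apply, Matrix.mul_apply, Finset.sum_mul_sum, Finset.mul_sum]
      refine Finset.sum_congr rfl fun i _ => ?_
      rw [Finset.mul_sum]
      refine Finset.sum_congr rfl fun j _ => ?_
      simp only [Matrix.transpose_apply]
      ring]
  exact sum4_swap (fun i j p q => U i p * r p * V j p * (UD i q * b q * VD j q))

private lemma one_entry_mul {k : ℕ} (p q : Fin k) :
    (1 : Matrix (Fin k) (Fin k) ℝ) p q * (1 : Matrix (Fin k) (Fin k) ℝ) p q
      = (1 : Matrix (Fin k) (Fin k) ℝ) p q := by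
  by_cases h : p = q <;> simp [Matrix.one_apply, h]

private lemma inn_svd_same {n m k : ℕ} (U : Matrix (Fin n) (Fin k) ℝ)
    (V : Matrix (Fin m) (Fin k) ℝ) (hU : Uᵀ * U = 1) (hV : Vᵀ * V = 1) (c d : Fin k → ℝ) :
    inn (U * diagonal c * Vᵀ) (U * diagonal d * Vᵀ) = ∑ p, c p * d p := by
  rw [inn_svd, hU, hV]
  refine Finset.sum_congr rfl fun p _ => ?_
  rw [Fintype.sum_eq_single p ?_]
  · simp [Matrix.one_apply_eq]
  · intro q hq
    simp [Matrix.one_apply, hq.symm]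

private lemma row_bound {n k : ℕ} (U UD : Matrix (Fin n) (Fin k) ℝ)
    (hU : Uᵀ * U = 1) (hUD : UDᵀ * UD = 1) (p : Fin k) :
    ∑ q, ((Uᵀ * UD) p q) ^ 2 ≤ 1 := by
  set M : Matrix (Fin k) (Fin k) ℝ := Uᵀ * UD with hM
  set C : Matrix (Fin n) (Fin k) ℝ := U - UD * Mᵀ with hCdef
  have hMT : UDᵀ * U = Mᵀ := by rw [hM, Matrix.transpose_mul, Matrix.transpose_transpose]
  have hC : Cᵀ * C = 1 - M * Mᵀ := by
    rw [hCdef, Matrix.transpose_sub, Matrix.transpose_mul, Matrix.transpose_transpose,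
      Matrix.sub_mul, Matrix.mul_sub, Matrix.mul_sub, hU]
    have e2 : Uᵀ * (UD * Mᵀ) = M * Mᵀ := by rw [← Matrix.mul_assoc, ← hM]
    have e3 : M * UDᵀ * U = M * Mᵀ := by rw [Matrix.mul_assoc, hMT]
    have e4 : M * UDᵀ * (UD * Mᵀ) = M * Mᵀ := by
      rw [Matrix.mul_assoc, ← Matrix.mul_assoc UDᵀ UD, hUD, Matrix.one_mul]
    rw [e2, e3, e4]
    abel
  have hdiag : (Cᵀ * C) p p = 1 - (M * Mᵀ) p p := by
    rw [hC, Matrix.sub_apply, Matrix.one_apply_eq]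
  have h1 : (M * Mᵀ) p p = ∑ q, (M p q) ^ 2 := by
    rw [Matrix.mul_apply]
    exact Finset.sum_congr rfl fun q _ => by rw [Matrix.transpose_apply, sq]
  have h2 : 0 ≤ (Cᵀ * C) p p := by
    rw [Matrix.mul_apply]
    exact Finset.sum_nonneg fun t _ => by rw [Matrix.transpose_apply]; exact mul_self_nonneg _
  rw [← h1]
  linarith

/-- Perturbation bound: with `L_Θ ∈ [0,1]` such that `u ↦ sup{t : Θ(t;λ) ≤ u} − (1−L_Θ)u`
is nondecreasing on `(0,∞)`, `B̂ = Θ^σ(Y;λ)` the minimizer of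
`Q(B) = ‖Y−B‖_F²/2 + ∑_i P_Θ(σ_i(B);λ)`, we have
`Q(B̂+Δ) − Q(B̂) ≥ (C₁/2)‖Δ‖_F²` with `C₁ = 1 − L_Θ`, for every `Δ`. -/
theorem perturbation_lower_bound {n m : ℕ}
    (Θ : ℝ → ℝ → ℝ) (hΘ : IsThresholdFunction Θ) (lam : ℝ) (hlam : 0 ≤ lam)
    (L : ℝ) (hL0 : 0 ≤ L) (hL1 : L ≤ 1)
    (hLmono : ∀ u v : ℝ, 0 < u → u ≤ v →
      sSup {s : ℝ | Θ s lam ≤ u} - (1 - L) * u ≤ sSup {s : ℝ | Θ s lam ≤ v} - (1 - L) * v)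
    (Y : Matrix (Fin n) (Fin m) ℝ)
    (U : Matrix (Fin n) (Fin (min n m)) ℝ) (σ : Fin (min n m) → ℝ)
    (V : Matrix (Fin m) (Fin (min n m)) ℝ)
    (hY : IsSVD Y U σ V)
    (hcont : ∀ i, ContinuousAt (fun s => Θ s lam) (σ i)) :
    ∀ (Δ : Matrix (Fin n) (Fin m) ℝ)
      (UD : Matrix (Fin n) (Fin (min n m)) ℝ) (σD : Fin (min n m) → ℝ)
      (VD : Matrix (Fin m) (Fin (min n m)) ℝ),
      IsSVD (U * diagonal (fun i => Θ (σ i) lam) * Vᵀ + Δ) UD σD VD →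
      (frobSq (Y - (U * diagonal (fun i => Θ (σ i) lam) * Vᵀ + Δ)) / 2
          + ∑ i, penaltyOf Θ lam (σD i))
        - (frobSq (Y - U * diagonal (fun i => Θ (σ i) lam) * Vᵀ) / 2
          + ∑ i, penaltyOf Θ lam (Θ (σ i) lam))
        ≥ (1 - L) / 2 * frobSq Δ := by
  intro Δ UD σD VD hB
  obtain ⟨hU, hV, hσa, hσ0, hYdef⟩ := hY
  obtain ⟨hUD, hVD, hba, hb0, hBdef⟩ := hB
  obtain ⟨hodd, hmono, htop, hbound⟩ := hΘ lam hlam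
  have hf0 : Θ 0 lam = 0 := by have h := hodd 0; rw [neg_zero] at h; linarith
  have hθ0 : ∀ i, 0 ≤ Θ (σ i) lam := fun i => (hbound (σ i) (hσ0 i)).1
  have hθσ : ∀ i, Θ (σ i) lam ≤ σ i := fun i => (hbound (σ i) (hσ0 i)).2
  set r : Fin (min n m) → ℝ := fun i => σ i - (1 - L) * Θ (σ i) lam with hrdef
  have hr0 : ∀ i, 0 ≤ r i := by
    intro i; have h1 := hθ0 i; have h2 := hθσ i
    simp only [hrdef]; nlinarith
  have hranti : ∀ i j : Fin (min n m), i ≤ j → r j ≤ r i := by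
    intro i j hij
    have hσji : σ j ≤ σ i := hσa hij
    have hθji : Θ (σ j) lam ≤ Θ (σ i) lam := hmono hσji
    simp only [hrdef]
    rcases eq_or_lt_of_le hθji with he | hlt
    · rw [he]; linarith
    · have hkA := thf_keyA hmono htop hL0 hL1 hLmono (σ j) (hσ0 j) (hθ0 j)
        ((Θ (σ j) lam + Θ (σ i) lam) / 2) (by linarith)
      have hkB := thf_keyB hmono htop hf0 hL0 hL1 hLmono (σ i) (hσ0 i) (hcont i)
        ((Θ (σ j) lam + Θ (σ i) lam) / 2) (by linarith [hθ0 j]) (by linarith)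
      linarith
  have hpen : ∀ x : ℝ, 0 ≤ x →
      penaltyOf Θ lam x = ∫ u in (0:ℝ)..x, (sSup {s : ℝ | Θ s lam ≤ u} - u) := by
    intro x hx; unfold penaltyOf; rw [abs_of_nonneg hx]
  have hscal : ∀ i, r i * (σD i - Θ (σ i) lam) ≤
      (penaltyOf Θ lam (σD i) + L * (σD i) ^ 2 / 2)
      - (penaltyOf Θ lam (Θ (σ i) lam) + L * (Θ (σ i) lam) ^ 2 / 2) := by
    intro i
    rw [hpen _ (hb0 i), hpen _ (hθ0 i)]
    simp only [hrdef]
    exact thf_scalar hmono htop hf0 hbound hL0 hL1 hLmono (σ i) (hσ0 i) (hcont i) (σD i) (hb0 i)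
  -- matrix notation
  set Bh : Matrix (Fin n) (Fin m) ℝ := U * diagonal (fun i => Θ (σ i) lam) * Vᵀ with hBh
  set A : Matrix (Fin n) (Fin m) ℝ := U * diagonal r * Vᵀ with hA
  have hent : ∀ i j, (Y - Bh) i j = A i j - L * Bh i j := by
    intro i j
    rw [Matrix.sub_apply, hYdef, hA, hBh]
    simp only [inn_entry_expand]
    rw [Finset.mul_sum, ← Finset.sum_sub_distrib, ← Finset.sum_sub_distrib]
    refine Finset.sum_congr rfl fun p _ => ?_
    simp only [hrdef]
    ring
  have a3 : inn (Y - Bh) Δ = inn A Δ - L * inn Bh Δ := by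
    unfold inn
    rw [Finset.mul_sum, ← Finset.sum_sub_distrib]
    refine Finset.sum_congr rfl fun i _ => ?_
    rw [Finset.mul_sum, ← Finset.sum_sub_distrib]
    refine Finset.sum_congr rfl fun j _ => ?_
    rw [hent i j]
    ring
  have a4 : inn A (Bh + Δ) = inn A Bh + inn A Δ := inn_add_right A Bh Δ
  have a5 : inn A Bh = ∑ p, r p * Θ (σ p) lam := by
    rw [hA, hBh]
    exact inn_svd_same U V hU hV r _
  have a7 : frobSq (Bh + Δ) = ∑ p, (σD p) ^ 2 := by
    rw [hBdef, frobSq_eq_inn, inn_svd_same UD VD hUD hVD σD σD]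
    exact Finset.sum_congr rfl fun p _ => (pow_two (σD p)).symm
  have a8 : frobSq Bh = ∑ p, (Θ (σ p) lam) ^ 2 := by
    rw [hBh, frobSq_eq_inn, inn_svd_same U V hU hV _ _]
    exact Finset.sum_congr rfl fun p _ => (pow_two _).symm
  have a9 : frobSq (Bh + Δ) = frobSq Bh + 2 * inn Bh Δ + frobSq Δ := frobSq_add_expand Bh Δ
  -- von Neumann-type bound
  have hMrow := row_bound U UD hU hUD
  have hNrow := row_bound V VD hV hVD
  have hMcol : ∀ q, ∑ p, ((Uᵀ * UD) p q) ^ 2 ≤ 1 := by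
    intro q
    have h := row_bound UD U hUD hU q
    calc ∑ p, ((Uᵀ * UD) p q) ^ 2 = ∑ p, ((UDᵀ * U) q p) ^ 2 := by
          refine Finset.sum_congr rfl fun p _ => ?_
          congr 1
          rw [Matrix.mul_apply, Matrix.mul_apply]
          exact Finset.sum_congr rfl fun t _ => by
            rw [Matrix.transpose_apply, Matrix.transpose_apply]; ring
      _ ≤ 1 := h
  have hNcol : ∀ q, ∑ p, ((Vᵀ * VD) p q) ^ 2 ≤ 1 := by
    intro q
    have h := row_bound VD V hVD hV q
    calc ∑ p, ((Vᵀ * VD) p q) ^ 2 = ∑ p, ((VDᵀ * V) q p) ^ 2 := by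
          refine Finset.sum_congr rfl fun p _ => ?_
          congr 1
          rw [Matrix.mul_apply, Matrix.mul_apply]
          exact Finset.sum_congr rfl fun t _ => by
            rw [Matrix.transpose_apply, Matrix.transpose_apply]; ring
      _ ≤ 1 := h
  have hVN : inn A (Bh + Δ) ≤ ∑ p, r p * σD p := by
    rw [hBdef, hA, inn_svd]
    have step1 : ∑ p, ∑ q, r p * σD q * ((Uᵀ * UD) p q * (Vᵀ * VD) p q)
        ≤ ∑ p, ∑ q, r p * σD q * ((((Uᵀ * UD) p q) ^ 2 + ((Vᵀ * VD) p q) ^ 2) / 2) :=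
      Finset.sum_le_sum fun p _ => Finset.sum_le_sum fun q _ =>
        mul_le_mul_of_nonneg_left
          (by nlinarith [sq_nonneg ((Uᵀ * UD) p q - (Vᵀ * VD) p q)])
          (mul_nonneg (hr0 p) (hb0 q))
    set r' : ℕ → ℝ := fun i => if h : i < min n m then r ⟨i, h⟩ else 0 with hr'
    set b' : ℕ → ℝ := fun i => if h : i < min n m then σD ⟨i, h⟩ else 0 with hb'
    set w' : ℕ → ℕ → ℝ := fun i j =>
      if hi : i < min n m then if hj : j < min n m then
        (((Uᵀ * UD) ⟨i, hi⟩ ⟨j, hj⟩) ^ 2 + ((Vᵀ * VD) ⟨i, hi⟩ ⟨j, hj⟩) ^ 2) / 2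
      else 0 else 0 with hw'
    have hr0' : ∀ i, 0 ≤ r' i := by
      intro i; by_cases h : i < min n m
      · simp only [hr', dif_pos h]; exact hr0 _
      · simp only [hr', dif_neg h]; exact le_rfl
    have hb0' : ∀ i, 0 ≤ b' i := by
      intro i; by_cases h : i < min n m
      · simp only [hb', dif_pos h]; exact hb0 _
      · simp only [hb', dif_neg h]; exact le_rfl
    have hrm' : ∀ i j : ℕ, i ≤ j → r' j ≤ r' i := by
      intro i j hij
      by_cases hj : j < min n m
      · have hi : i < min n m := lt_of_le_of_lt hij hj
        simp only [hr', dif_pos hi, dif_pos hj]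
        exact hranti ⟨i, hi⟩ ⟨j, hj⟩ hij
      · have hz : r' j = 0 := by simp only [hr', dif_neg hj]
        rw [hz]; exact hr0' i
    have hbm' : ∀ i j : ℕ, i ≤ j → b' j ≤ b' i := by
      intro i j hij
      by_cases hj : j < min n m
      · have hi : i < min n m := lt_of_le_of_lt hij hj
        simp only [hb', dif_pos hi, dif_pos hj]
        exact hba (show (⟨i, hi⟩ : Fin (min n m)) ≤ ⟨j, hj⟩ from hij)
      · have hz : b' j = 0 := by simp only [hb', dif_neg hj]
        rw [hz]; exact hb0' i
    have hw0' : ∀ i j, 0 ≤ w' i j := by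
      intro i j
      by_cases hi : i < min n m
      · by_cases hj : j < min n m
        · simp only [hw', dif_pos hi, dif_pos hj]; positivity
        · simp only [hw', dif_pos hi, dif_neg hj]; exact le_rfl
      · simp only [hw', dif_neg hi]; exact le_rfl
    have hrow' : ∀ i, ∑ j ∈ Finset.range (min n m), w' i j ≤ 1 := by
      intro i
      by_cases hi : i < min n m
      · have he : ∑ j ∈ Finset.range (min n m), w' i j
            = ∑ q, ((((Uᵀ * UD) ⟨i, hi⟩ q) ^ 2 + ((Vᵀ * VD) ⟨i, hi⟩ q) ^ 2) / 2) := by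
          rw [fin_sum_dite
            (fun q => (((Uᵀ * UD) ⟨i, hi⟩ q) ^ 2 + ((Vᵀ * VD) ⟨i, hi⟩ q) ^ 2) / 2)]
          exact Finset.sum_congr rfl fun j _ => by simp only [hw', dif_pos hi]
        rw [he, show (∑ q, ((((Uᵀ * UD) ⟨i, hi⟩ q) ^ 2 + ((Vᵀ * VD) ⟨i, hi⟩ q) ^ 2) / 2))
            = ((∑ q, ((Uᵀ * UD) ⟨i, hi⟩ q) ^ 2) + ∑ q, ((Vᵀ * VD) ⟨i, hi⟩ q) ^ 2) / 2 from by
          rw [← Finset.sum_add_distrib, ← Finset.sum_div]]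
        linarith [hMrow ⟨i, hi⟩, hNrow ⟨i, hi⟩]
      · have he : ∀ j, w' i j = 0 := fun j => by simp only [hw', dif_neg hi]
        rw [Finset.sum_congr rfl (fun j _ => he j), Finset.sum_const_zero]
        norm_num
    have hcol' : ∀ j, ∑ i ∈ Finset.range (min n m), w' i j ≤ 1 := by
      intro j
      by_cases hj : j < min n m
      · have he : ∑ i ∈ Finset.range (min n m), w' i j
            = ∑ p, ((((Uᵀ * UD) p ⟨j, hj⟩) ^ 2 + ((Vᵀ * VD) p ⟨j, hj⟩) ^ 2) / 2) := by
          rw [fin_sum_dite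
            (fun p => (((Uᵀ * UD) p ⟨j, hj⟩) ^ 2 + ((Vᵀ * VD) p ⟨j, hj⟩) ^ 2) / 2)]
          exact Finset.sum_congr rfl fun i _ => by simp only [hw', dif_pos hj]
        rw [he, show (∑ p, ((((Uᵀ * UD) p ⟨j, hj⟩) ^ 2 + ((Vᵀ * VD) p ⟨j, hj⟩) ^ 2) / 2))
            = ((∑ p, ((Uᵀ * UD) p ⟨j, hj⟩) ^ 2) + ∑ p, ((Vᵀ * VD) p ⟨j, hj⟩) ^ 2) / 2 from by
          rw [← Finset.sum_add_distrib, ← Finset.sum_div]]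
        linarith [hMcol ⟨j, hj⟩, hNcol ⟨j, hj⟩]
      · have he : ∀ i, w' i j = 0 := by
          intro i
          by_cases hi : i < min n m
          · simp only [hw', dif_pos hi, dif_neg hj]
          · simp only [hw', dif_neg hi]
        rw [Finset.sum_congr rfl (fun i _ => he i), Finset.sum_const_zero]
        norm_num
    have happ := substoch (min n m) r' b' w' hrm' hr0' hbm' hb0' hw0' hrow' hcol'
    have conv1 : ∑ p, ∑ q, r p * σD q * ((((Uᵀ * UD) p q) ^ 2 + ((Vᵀ * VD) p q) ^ 2) / 2)
        = ∑ i ∈ Finset.range (min n m), ∑ j ∈ Finset.range (min n m), r' i * b' j * w' i j := by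
      rw [fin_sum_dite
        (fun p => ∑ q, r p * σD q * ((((Uᵀ * UD) p q) ^ 2 + ((Vᵀ * VD) p q) ^ 2) / 2))]
      refine Finset.sum_congr rfl fun i hi => ?_
      have hiK : i < min n m := Finset.mem_range.mp hi
      rw [dif_pos hiK, fin_sum_dite
        (fun q => r ⟨i, hiK⟩ * σD q * ((((Uᵀ * UD) ⟨i, hiK⟩ q) ^ 2 + ((Vᵀ * VD) ⟨i, hiK⟩ q) ^ 2) / 2))]
      refine Finset.sum_congr rfl fun j hj => ?_
      have hjK : j < min n m := Finset.mem_range.mp hj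
      rw [dif_pos hjK]
      simp only [hr', hb', hw', dif_pos hiK, dif_pos hjK]
    have conv2 : ∑ p, r p * σD p
        = ∑ i ∈ Finset.range (min n m), r' i * b' i := by
      rw [fin_sum_dite (fun p => r p * σD p)]
      refine Finset.sum_congr rfl fun i hi => ?_
      have hiK : i < min n m := Finset.mem_range.mp hi
      rw [dif_pos hiK]
      simp only [hr', hb', dif_pos hiK]
    calc ∑ p, ∑ q, r p * σD q * ((Uᵀ * UD) p q * (Vᵀ * VD) p q)
        ≤ ∑ p, ∑ q, r p * σD q * ((((Uᵀ * UD) p q) ^ 2 + ((Vᵀ * VD) p q) ^ 2) / 2) := step1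
      _ = ∑ i ∈ Finset.range (min n m), ∑ j ∈ Finset.range (min n m), r' i * b' j * w' i j := conv1
      _ ≤ ∑ i ∈ Finset.range (min n m), r' i * b' i := happ
      _ = ∑ p, r p * σD p := conv2.symm
  -- summing the scalar inequality
  have hsum := Finset.sum_le_sum (fun i (_ : i ∈ Finset.univ) => hscal i)
  have e1 : ∑ i, r i * (σD i - Θ (σ i) lam)
      = (∑ i, r i * σD i) - ∑ i, r i * Θ (σ i) lam := by
    rw [← Finset.sum_sub_distrib]
    exact Finset.sum_congr rfl fun i _ => by ring
  have e2 : ∑ i, ((penaltyOf Θ lam (σD i) + L * (σD i) ^ 2 / 2)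
      - (penaltyOf Θ lam (Θ (σ i) lam) + L * (Θ (σ i) lam) ^ 2 / 2))
      = ((∑ i, penaltyOf Θ lam (σD i)) - ∑ i, penaltyOf Θ lam (Θ (σ i) lam))
        + L / 2 * ((∑ i, (σD i) ^ 2) - ∑ i, (Θ (σ i) lam) ^ 2) := by
    simp only [Finset.sum_sub_distrib, Finset.sum_add_distrib]
    rw [show ∑ i, L * (σD i) ^ 2 / 2 = L / 2 * ∑ i, (σD i) ^ 2 from by
      rw [Finset.mul_sum]; exact Finset.sum_congr rfl fun i _ => by ring]
    rw [show ∑ i, L * (Θ (σ i) lam) ^ 2 / 2 = L / 2 * ∑ i, (Θ (σ i) lam) ^ 2 from by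
      rw [Finset.mul_sum]; exact Finset.sum_congr rfl fun i _ => by ring]
    ring
  rw [e1, e2] at hsum
  have heq : (∑ i, (σD i) ^ 2) - (∑ i, (Θ (σ i) lam) ^ 2) = 2 * inn Bh Δ + frobSq Δ := by
    rw [← a7, ← a8, a9]; ring
  have k2 : L / 2 * ((∑ i, (σD i) ^ 2) - ∑ i, (Θ (σ i) lam) ^ 2)
      = L * inn Bh Δ + L / 2 * frobSq Δ := by
    rw [heq]; ring
  have hsub : Y - (Bh + Δ) = Y - Bh - Δ := sub_add_eq_sub_sub Y Bh Δ
  rw [hsub, frobSq_sub_expand (Y - Bh) Δ]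
  linarith [hsum, a3, a4, a5, hVN, k2]
end
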